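/- arXiv:2012.14203 — 3 statements merged into one kernel-verified Lean document; each statement's English description precedes it below -/
import Mathlib

section
/- Let h ∈ C²((0,+∞)) ∩ C([0,+∞)) be such that h''(r) > 0 for all r > 0 and lim_{r→+∞} h(r)/r^γ = k/(γ−1) for some constants k > 0 and γ > 1. Let 0 < δ ≤ M < +∞. Then there exist R ≥ M + 1 and positive constants C₁, C₂ such that: h(r|r̄) ≥ C₁ |r − r̄|² whenever (r, r̄) ∈ [0,R] × [δ,M], and h(r|r̄) ≥ C₂ |r − r̄|^γ whenever (r, r̄) ∈ (R,+∞) × [δ,M]. -/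
/-- The relative quantity `F(r|r̄) := F(r) − F(r̄) − F′(r̄)(r − r̄)`. -/
noncomputable def relQuant (F : ℝ → ℝ) (r rb : ℝ) : ℝ := F r - F rb - deriv F rb * (r - rb)

/-- Lemma 2.4 of Lattanzio–Tzavaras: if `h` is `C²` and strictly convex on `(0,∞)`,
continuous on `[0,∞)`, with `h(r)/r^γ → k/(γ−1)` as `r → ∞` for some `k > 0`, `γ > 1`,
and `r̄` ranges in `[δ, M]` with `0 < δ ≤ M`, then there are `R ≥ M + 1` and constants
`C₁, C₂ > 0` such that `h(r|r̄) ≥ C₁|r−r̄|²` on `[0,R] × [δ,M]` and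
`h(r|r̄) ≥ C₂|r−r̄|^γ` on `(R,∞) × [δ,M]`. -/
theorem relative_energy_lower_bound (h : ℝ → ℝ) (k γ δ M : ℝ)
    (hk : 0 < k) (hγ : 1 < γ)
    (hC2 : ContDiffOn ℝ 2 h (Set.Ioi 0)) (hC0 : ContinuousOn h (Set.Ici 0))
    (hconv : ∀ r > (0 : ℝ), 0 < deriv (deriv h) r)
    (hlim : Filter.Tendsto (fun r : ℝ => h r / r ^ γ) Filter.atTop (nhds (k / (γ - 1))))
    (hδ : 0 < δ) (hδM : δ ≤ M) :
    ∃ R : ℝ, M + 1 ≤ R ∧ ∃ C₁ > (0 : ℝ), ∃ C₂ > (0 : ℝ),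
      (∀ r ∈ Set.Icc (0 : ℝ) R, ∀ rb ∈ Set.Icc δ M, C₁ * |r - rb| ^ 2 ≤ relQuant h r rb) ∧
      (∀ r ∈ Set.Ioi R, ∀ rb ∈ Set.Icc δ M, C₂ * |r - rb| ^ γ ≤ relQuant h r rb) := by
  have hMpos : 0 < M := lt_of_lt_of_le hδ hδM
  -- basic differentiability facts
  have hd1 : ContDiffOn ℝ 1 (deriv h) (Set.Ioi 0) :=
    hC2.deriv_of_isOpen (m := 1) isOpen_Ioi (by norm_num)
  have hdiff : ∀ r : ℝ, 0 < r → DifferentiableAt ℝ h r := fun r hr =>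
    ((hC2.differentiableOn (by norm_num)) r hr).differentiableAt (isOpen_Ioi.mem_nhds hr)
  have hdiff' : ∀ r : ℝ, 0 < r → DifferentiableAt ℝ (deriv h) r := fun r hr =>
    ((hd1.differentiableOn (by norm_num)) r hr).differentiableAt (isOpen_Ioi.mem_nhds hr)
  have hd'cont : ContinuousOn (deriv h) (Set.Ioi 0) := hd1.continuousOn
  have hd''cont : ContinuousOn (deriv (deriv h)) (Set.Ioi 0) :=
    (hd1.deriv_of_isOpen (m := 0) isOpen_Ioi (by norm_num)).continuousOn
  -- strict monotonicity of `deriv h`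
  have hmono' : StrictMonoOn (deriv h) (Set.Ioi 0) := by
    apply strictMonoOn_of_deriv_pos (convex_Ioi 0) hd'cont
    intro x hx
    rw [interior_Ioi] at hx
    exact hconv x hx
  -- positivity of `relQuant h r rb` for `0 ≤ r < rb`
  have hpos : ∀ rb ∈ Set.Icc δ M, ∀ r ∈ Set.Ico (0:ℝ) rb, 0 < relQuant h r rb := by
    intro rb hrb r hr
    have hrbpos : 0 < rb := lt_of_lt_of_le hδ hrb.1
    have hanti : StrictAntiOn (fun r => relQuant h r rb) (Set.Icc 0 rb) := by
      apply strictAntiOn_of_deriv_neg (convex_Icc 0 rb)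
      · simp only [relQuant]
        exact ((hC0.mono (by rw [Set.Icc_subset_Ici_iff hrbpos.le])).sub
          continuousOn_const).sub
          (continuousOn_const.mul (continuousOn_id.sub continuousOn_const))
      · intro x hx
        rw [interior_Icc] at hx
        have hx0 : 0 < x := hx.1
        have H : HasDerivAt (fun r => relQuant h r rb) (deriv h x - deriv h rb) x := by
          have h1 := (hdiff x hx0).hasDerivAt
          have h2 : HasDerivAt (fun r : ℝ => deriv h rb * (r - rb)) (deriv h rb) x := by
            simpa using ((hasDerivAt_id x).sub_const rb).const_mul (deriv h rb)
          exact (h1.sub_const (h rb)).sub h2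
        rw [H.deriv]
        have := hmono' (Set.mem_Ioi.2 hx0) (Set.mem_Ioi.2 hrbpos) hx.2
        linarith
    have hle : (0:ℝ) ≤ rb := hrbpos.le
    have := hanti (Set.mem_Icc.2 ⟨hr.1, hr.2.le⟩) (Set.right_mem_Icc.2 hle) hr.2
    simpa [relQuant] using this
  -- bounds for h and deriv h on [δ, M]
  have hIccIoi : Set.Icc δ M ⊆ Set.Ioi 0 := fun x hx => lt_of_lt_of_le hδ hx.1
  have hIccIci : Set.Icc δ M ⊆ Set.Ici 0 := fun x hx => le_trans hδ.le hx.1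
  have hKne : (Set.Icc δ M).Nonempty := Set.nonempty_Icc.2 hδM
  obtain ⟨a₀, ha₀mem, hA⟩ := isCompact_Icc.exists_isMaxOn hKne
    ((hC0.mono hIccIci).abs)
  obtain ⟨b₀, hb₀mem, hBmax⟩ := isCompact_Icc.exists_isMaxOn hKne
    ((hd'cont.mono hIccIoi).abs)
  set A : ℝ := |h a₀| with hA_def
  set B : ℝ := |deriv h b₀| with hB_def
  have hA0 : 0 ≤ A := abs_nonneg _
  have hB0 : 0 ≤ B := abs_nonneg _
  have hAle : ∀ rb ∈ Set.Icc δ M, |h rb| ≤ A := fun rb hrb => hA hrb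
  have hBle : ∀ rb ∈ Set.Icc δ M, |deriv h rb| ≤ B := fun rb hrb => hBmax hrb
  -- choose R using the asymptotics
  set c₂ : ℝ := k / (2 * (γ - 1)) with hc₂_def
  have hγ1 : 0 < γ - 1 := by linarith
  have hc₂pos : 0 < c₂ := div_pos hk (by linarith)
  have hc₂lt : c₂ < k / (γ - 1) := by
    rw [hc₂_def, div_lt_div_iff₀ (by linarith) hγ1]
    nlinarith
  have ev1 : ∀ᶠ r : ℝ in Filter.atTop, c₂ ≤ h r / r ^ γ :=
    hlim.eventually (eventually_ge_nhds hc₂lt)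
  set T : ℝ := 2 * (A + B + 1) / c₂ with hT_def
  have ev2 : ∀ᶠ r : ℝ in Filter.atTop, T ≤ r ^ (γ - 1) :=
    (tendsto_rpow_atTop hγ1).eventually_ge_atTop T
  obtain ⟨N, hN⟩ := Filter.eventually_atTop.1 (ev1.and ev2)
  set R : ℝ := max N (M + 1) with hR_def
  have hRM : M + 1 ≤ R := le_max_right _ _
  have hRpos : 0 < R := by linarith
  have hδ2R : δ / 2 ≤ R := by linarith
  -- the minimum of h'' on [δ/2, R]
  have hsub2 : Set.Icc (δ/2) R ⊆ Set.Ioi 0 := fun x hx =>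
    lt_of_lt_of_le (half_pos hδ) hx.1
  obtain ⟨c, hcmem, hm⟩ := isCompact_Icc.exists_isMinOn (Set.nonempty_Icc.2 hδ2R)
    (hd''cont.mono hsub2)
  set m : ℝ := deriv (deriv h) c with hm_def
  have hmpos : 0 < m := hconv c (hsub2 hcmem)
  have hmle : ∀ x ∈ Set.Icc (δ/2) R, m ≤ deriv (deriv h) x := fun x hx => hm hx
  -- auxiliary monotone function u
  set u : ℝ → ℝ := fun r => deriv h r - m * r with hu_def
  have humono : MonotoneOn u (Set.Icc (δ/2) R) := by
    apply monotoneOn_of_deriv_nonneg (convex_Icc _ _)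
    · exact (hd'cont.mono hsub2).sub (continuousOn_const.mul continuousOn_id)
    · intro x hx
      rw [interior_Icc] at hx
      have hx0 : 0 < x := lt_of_lt_of_le (half_pos hδ) hx.1.le
      exact ((hdiff' x hx0).sub ((differentiableAt_id).const_mul m)).differentiableWithinAt
    · intro x hx
      rw [interior_Icc] at hx
      have hx0 : 0 < x := lt_of_lt_of_le (half_pos hδ) hx.1.le
      have hud : HasDerivAt u (deriv (deriv h) x - m) x := by
        have := (hdiff' x hx0).hasDerivAt.sub ((hasDerivAt_id x).const_mul m)
        rw [mul_one] at this
        exact this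
      rw [hud.deriv]
      have := hmle x ⟨hx.1.le, hx.2.le⟩
      linarith
  -- derivative of the key auxiliary function
  have hfd : ∀ rb, 0 < rb → ∀ x, 0 < x →
      HasDerivAt (fun r => relQuant h r rb - m/2 * (r - rb)^2) (u x - u rb) x := by
    intro rb _ x hx0
    have hh := (hdiff x hx0).hasDerivAt
    have hp : HasDerivAt (fun r : ℝ => m/2*(r-rb)^2) (m*(x-rb)) x := by
      have := (((hasDerivAt_id x).sub_const rb).pow 2).const_mul (m/2)
      exact this.congr_deriv (by simp only [id]; norm_num; ring)
    have hl : HasDerivAt (fun r : ℝ => deriv h rb * (r - rb)) (deriv h rb) x := by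
      simpa using ((hasDerivAt_id x).sub_const rb).const_mul (deriv h rb)
    have H := ((hh.sub_const (h rb)).sub hl).sub hp
    have : u x - u rb = deriv h x - deriv h rb - m * (x - rb) := by
      simp only [hu_def]; ring
    rw [this]
    exact H
  -- quadratic lower bound on [δ/2, R]
  have hquad : ∀ rb ∈ Set.Icc δ M, ∀ r ∈ Set.Icc (δ/2) R,
      m/2 * (r - rb)^2 ≤ relQuant h r rb := by
    intro rb hrb r hr
    have hrbpos : 0 < rb := lt_of_lt_of_le hδ hrb.1
    have hrbmem : rb ∈ Set.Icc (δ/2) R := ⟨by linarith [hrb.1], by linarith [hrb.2]⟩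
    set f : ℝ → ℝ := fun r => relQuant h r rb - m/2 * (r - rb)^2 with hf_def
    have hfcont : ContinuousOn f (Set.Icc (δ/2) R) := by
      simp only [hf_def, relQuant]
      exact (((hC0.mono (fun x hx => le_trans (half_pos hδ).le hx.1)).sub
        continuousOn_const).sub
        (continuousOn_const.mul (continuousOn_id.sub continuousOn_const))).sub
        (continuousOn_const.mul ((continuousOn_id.sub continuousOn_const).pow 2))
    have hfrb : f rb = 0 := by simp [hf_def, relQuant]
    have key : 0 ≤ f r := by
      rcases le_total r rb with hle | hle
      · have hanti : AntitoneOn f (Set.Icc (δ/2) rb) := by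
          apply antitoneOn_of_deriv_nonpos (convex_Icc _ _)
          · exact hfcont.mono (Set.Icc_subset_Icc le_rfl hrbmem.2)
          · intro x hx
            rw [interior_Icc] at hx
            have hx0 : 0 < x := lt_of_lt_of_le (half_pos hδ) hx.1.le
            exact (hfd rb hrbpos x hx0).differentiableAt.differentiableWithinAt
          · intro x hx
            rw [interior_Icc] at hx
            have hx0 : 0 < x := lt_of_lt_of_le (half_pos hδ) hx.1.le
            rw [(hfd rb hrbpos x hx0).deriv]
            have := humono ⟨hx.1.le, le_trans hx.2.le hrbmem.2⟩ hrbmem hx.2.le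
            linarith
        have := hanti ⟨hr.1, hle⟩ (Set.right_mem_Icc.2 hrbmem.1) hle
        rw [hfrb] at this
        exact this
      · have hmono : MonotoneOn f (Set.Icc rb R) := by
          apply monotoneOn_of_deriv_nonneg (convex_Icc _ _)
          · exact hfcont.mono (Set.Icc_subset_Icc hrbmem.1 le_rfl)
          · intro x hx
            rw [interior_Icc] at hx
            have hx0 : 0 < x := lt_trans hrbpos hx.1
            exact (hfd rb hrbpos x hx0).differentiableAt.differentiableWithinAt
          · intro x hx
            rw [interior_Icc] at hx
            have hx0 : 0 < x := lt_trans hrbpos hx.1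
            rw [(hfd rb hrbpos x hx0).deriv]
            have := humono hrbmem ⟨le_trans hrbmem.1 hx.1.le, hx.2.le⟩ hx.1.le
            linarith
        have := hmono (Set.left_mem_Icc.2 (le_trans hle hr.2)) ⟨hle, hr.2⟩ hle
        rw [hfrb] at this
        exact this
    simp only [hf_def] at key
    linarith
  -- compact positivity on [0, δ/2] × [δ, M]
  have hcontA : ContinuousOn (fun p : ℝ × ℝ => relQuant h p.1 p.2)
      (Set.Icc 0 (δ/2) ×ˢ Set.Icc δ M) := by
    simp only [relQuant]
    refine ((ContinuousOn.sub ?_ ?_).sub ?_)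
    · exact hC0.comp continuousOn_fst (fun p hp => hp.1.1)
    · exact hC0.comp continuousOn_snd (fun p hp => hIccIci hp.2)
    · exact (hd'cont.comp continuousOn_snd (fun p hp => hIccIoi hp.2)).mul
        (continuousOn_fst.sub continuousOn_snd)
  have hprodne : (Set.Icc (0:ℝ) (δ/2) ×ˢ Set.Icc δ M).Nonempty :=
    ⟨(0, δ), Set.mk_mem_prod ⟨le_rfl, (half_pos hδ).le⟩ ⟨le_rfl, hδM⟩⟩
  obtain ⟨p₀, hp₀mem, hp₀min⟩ := (isCompact_Icc.prod isCompact_Icc).exists_isMinOn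
    hprodne hcontA
  set ε : ℝ := relQuant h p₀.1 p₀.2 with hε_def
  have hεpos : 0 < ε := by
    apply hpos p₀.2 hp₀mem.2 p₀.1
    exact ⟨hp₀mem.1.1, lt_of_le_of_lt hp₀mem.1.2 (lt_of_lt_of_le (by linarith) hp₀mem.2.1)⟩
  have hεle : ∀ r ∈ Set.Icc (0:ℝ) (δ/2), ∀ rb ∈ Set.Icc δ M, ε ≤ relQuant h r rb := by
    intro r hr rb hrb
    exact hp₀min (Set.mk_mem_prod hr hrb)
  -- assemble constants
  refine ⟨R, hRM, min (m/2) (ε / R^2), ?_, c₂/2, by positivity, ?_, ?_⟩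
  · exact lt_min (by positivity) (by positivity)
  · -- part 1
    intro r hr rb hrb
    have hrbpos : 0 < rb := lt_of_lt_of_le hδ hrb.1
    rcases le_total r (δ/2) with hcase | hcase
    · have h1 : ε ≤ relQuant h r rb := hεle r ⟨hr.1, hcase⟩ rb hrb
      have habs : |r - rb| ≤ R := by
        rw [abs_le]
        constructor <;> [linarith [hr.1, hrb.2]; linarith [hr.2, hrb.1]]
      have h2 : |r - rb| ^ 2 ≤ R ^ 2 := by
        have := pow_le_pow_left₀ (abs_nonneg (r - rb)) habs 2
        simpa using this
      calc min (m/2) (ε / R^2) * |r - rb| ^ 2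
          ≤ (ε / R^2) * |r - rb| ^ 2 :=
            mul_le_mul_of_nonneg_right (min_le_right _ _) (by positivity)
        _ ≤ (ε / R^2) * R^2 := mul_le_mul_of_nonneg_left h2 (by positivity)
        _ = ε := by field_simp
        _ ≤ relQuant h r rb := h1
    · have h1 := hquad rb hrb r ⟨hcase, hr.2⟩
      have h2 : min (m/2) (ε / R^2) * |r - rb| ^ 2 ≤ m/2 * |r - rb| ^ 2 :=
        mul_le_mul_of_nonneg_right (min_le_left _ _) (by positivity)
      rw [← sq_abs (r - rb)] at h1
      linarith
  · -- part 2
    intro r hr rb hrb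
    have hrR : R < r := hr
    have hrN : N ≤ r := le_trans (le_max_left _ _) hrR.le
    have hr1 : 1 < r := by linarith
    have hr0 : 0 < r := by linarith
    obtain ⟨hev1, hev2⟩ := hN r hrN
    have hrγpos : 0 < r ^ γ := Real.rpow_pos_of_pos hr0 γ
    have hhr : c₂ * r ^ γ ≤ h r := by
      rw [le_div_iff₀ hrγpos] at hev1
      linarith
    have hrbM : rb ≤ M := hrb.2
    have hrbpos : 0 < rb := lt_of_lt_of_le hδ hrb.1
    have hsub0 : 0 ≤ r - rb := by linarith
    have hsubr : r - rb ≤ r := by linarith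
    -- bound the linear part
    have hlin : deriv h rb * (r - rb) ≤ B * r := by
      calc deriv h rb * (r - rb) ≤ |deriv h rb * (r - rb)| := le_abs_self _
        _ = |deriv h rb| * |r - rb| := abs_mul _ _
        _ ≤ B * r := by
            apply mul_le_mul (hBle rb hrb) _ (abs_nonneg _) hB0
            rw [abs_of_nonneg hsub0]; exact hsubr
    have hhb : h rb ≤ A := le_trans (le_abs_self _) (hAle rb hrb)
    have hlow : h r - A - B * r ≤ relQuant h r rb := by
      simp only [relQuant]
      linarith
    -- r^γ = r^(γ-1) * r
    have hsplit : r ^ γ = r ^ (γ - 1) * r := by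
      rw [← Real.rpow_add_one (ne_of_gt hr0) (γ - 1)]
      norm_num
    have hTc : c₂ / 2 * T = A + B + 1 := by
      rw [hT_def]; field_simp
    have hmain : A + B * r ≤ c₂ / 2 * r ^ γ := by
      have h1 : c₂ / 2 * T ≤ c₂ / 2 * r ^ (γ - 1) :=
        mul_le_mul_of_nonneg_left hev2 (by positivity)
      rw [hTc] at h1
      have h2 : (A + B + 1) * r ≤ c₂ / 2 * r ^ (γ - 1) * r :=
        mul_le_mul_of_nonneg_right h1 hr0.le
      rw [hsplit]
      nlinarith
    have hbig : c₂ / 2 * r ^ γ ≤ relQuant h r rb := by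
      have : c₂ * r ^ γ - A - B * r ≥ c₂ / 2 * r ^ γ := by linarith
      linarith
    have habsγ : |r - rb| ^ γ ≤ r ^ γ := by
      rw [abs_of_nonneg hsub0]
      exact Real.rpow_le_rpow hsub0 hsubr (by linarith)
    calc c₂ / 2 * |r - rb| ^ γ ≤ c₂ / 2 * r ^ γ :=
          mul_le_mul_of_nonneg_left habsγ (by positivity)
      _ ≤ relQuant h r rb := hbig
end

section
/- Let h ∈ C²((0,+∞)) ∩ C([0,+∞)) be such that h''(r) > 0 for all r > 0 and lim_{r→+∞} h(r)/r^γ = k/(γ−1) for some constants k > 0 and γ ≥ 2. Let 0 < δ ≤ M < +∞. Then there exists a positive constant C such that h(r|r̄) ≥ C |r − r̄|² for every r ∈ [0,+∞) and every r̄ ∈ [δ,M]. -/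
set_option maxHeartbeats 1000000
open Set

lemma aux_quad (h : ℝ → ℝ) (m a b : ℝ) (ha : 0 < a)
    (hd1 : ∀ x > (0:ℝ), DifferentiableAt ℝ h x)
    (hd2 : ∀ x > (0:ℝ), DifferentiableAt ℝ (deriv h) x)
    (hm : ∀ x ∈ Set.Icc a b, m ≤ deriv (deriv h) x)
    (rb : ℝ) (hrb : rb ∈ Set.Icc a b) (r : ℝ) (hr : r ∈ Set.Icc a b) :
    m / 2 * (r - rb) ^ 2 ≤ h r - h rb - deriv h rb * (r - rb) := by
  set g : ℝ → ℝ := fun x => deriv h x - m * x with hg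
  have hgd : ∀ x > (0:ℝ), HasDerivAt g (deriv (deriv h) x - m) x := by
    intro x hx
    have h1 : HasDerivAt (fun x : ℝ => m * x) m x := by
      simpa using (hasDerivAt_id x).const_mul m
    exact ((hd2 x hx).hasDerivAt).sub h1
  have hgmono : MonotoneOn g (Icc a b) := by
    apply monotoneOn_of_deriv_nonneg (convex_Icc a b)
    · intro x hx
      exact ((hgd x (lt_of_lt_of_le ha hx.1)).continuousAt).continuousWithinAt
    · intro x hx
      rw [interior_Icc] at hx
      exact ((hgd x (lt_of_lt_of_le ha hx.1.le)).differentiableAt).differentiableWithinAt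
    · intro x hx
      rw [interior_Icc] at hx
      rw [(hgd x (lt_of_lt_of_le ha hx.1.le)).deriv]
      have := hm x ⟨hx.1.le, hx.2.le⟩
      linarith
  set ψ : ℝ → ℝ := fun x => h x - h rb - deriv h rb * (x - rb) - m / 2 * (x - rb) ^ 2 with hψ
  have hψd : ∀ x > (0:ℝ), HasDerivAt ψ (g x - g rb) x := by
    intro x hx
    have H1 : HasDerivAt (fun x : ℝ => deriv h rb * (x - rb)) (deriv h rb) x := by
      simpa using ((hasDerivAt_id x).sub_const rb).const_mul (deriv h rb)
    have H2 : HasDerivAt (fun x : ℝ => m / 2 * (x - rb) ^ 2) (m * (x - rb)) x := by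
      have := (((hasDerivAt_id x).sub_const rb).fun_pow 2).const_mul (m / 2)
      refine this.congr_deriv ?_
      simp only [id]
      push_cast
      ring
    have := (((hd1 x hx).hasDerivAt.sub_const (h rb)).sub H1).sub H2
    refine this.congr_deriv ?_
    simp only [hg]
    ring
  have hψ0 : ψ rb = 0 := by simp [hψ]
  have key : 0 ≤ ψ r := by
    rcases le_total rb r with hle | hle
    · have hmono : MonotoneOn ψ (Icc rb b) := by
        apply monotoneOn_of_deriv_nonneg (convex_Icc rb b)
        · intro x hx
          exact ((hψd x (lt_of_lt_of_le ha (hrb.1.trans hx.1))).continuousAt).continuousWithinAt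
        · intro x hx
          rw [interior_Icc] at hx
          exact ((hψd x (lt_of_lt_of_le ha (hrb.1.trans hx.1.le))).differentiableAt).differentiableWithinAt
        · intro x hx
          rw [interior_Icc] at hx
          rw [(hψd x (lt_of_lt_of_le ha (hrb.1.trans hx.1.le))).deriv]
          have := hgmono hrb ⟨hrb.1.trans hx.1.le, hx.2.le⟩ hx.1.le
          linarith
      have := hmono ⟨le_refl rb, hrb.2⟩ ⟨hle, hr.2⟩ hle
      linarith [hψ0]
    · have hmono : AntitoneOn ψ (Icc a rb) := by
        apply antitoneOn_of_deriv_nonpos (convex_Icc a rb)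
        · intro x hx
          exact ((hψd x (lt_of_lt_of_le ha hx.1)).continuousAt).continuousWithinAt
        · intro x hx
          rw [interior_Icc] at hx
          exact ((hψd x (lt_of_lt_of_le ha hx.1.le)).differentiableAt).differentiableWithinAt
        · intro x hx
          rw [interior_Icc] at hx
          rw [(hψd x (lt_of_lt_of_le ha hx.1.le)).deriv]
          have := hgmono ⟨hx.1.le, hx.2.le.trans hrb.2⟩ hrb hx.2.le
          linarith
      have := hmono ⟨hr.1, hle⟩ ⟨hrb.1, le_refl rb⟩ hle
      linarith [hψ0]
  simp only [hψ] at key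
  linarith


theorem main_test (h : ℝ → ℝ) (k γ δ M : ℝ)
    (hk : 0 < k) (hγ : 2 ≤ γ)
    (hC2 : ContDiffOn ℝ 2 h (Set.Ioi 0)) (hC0 : ContinuousOn h (Set.Ici 0))
    (hconv : ∀ r > (0 : ℝ), 0 < deriv (deriv h) r)
    (hlim : Filter.Tendsto (fun r : ℝ => h r / r ^ γ) Filter.atTop (nhds (k / (γ - 1))))
    (hδ : 0 < δ) (hδM : δ ≤ M) :
    ∃ C > (0 : ℝ), ∀ r ∈ Set.Ici (0 : ℝ), ∀ rb ∈ Set.Icc δ M,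
      C * |r - rb| ^ 2 ≤ h r - h rb - deriv h rb * (r - rb) := by
  -- basic differentiability facts
  have hd1 : ∀ x > (0:ℝ), DifferentiableAt ℝ h x := by
    intro x hx
    exact (hC2.differentiableOn (by norm_num)).differentiableAt (isOpen_Ioi.mem_nhds hx)
  have hC1' : ContDiffOn ℝ 1 (deriv h) (Set.Ioi 0) :=
    hC2.deriv_of_isOpen isOpen_Ioi (by norm_num)
  have hd2 : ∀ x > (0:ℝ), DifferentiableAt ℝ (deriv h) x := by
    intro x hx
    exact (hC1'.differentiableOn (by norm_num)).differentiableAt (isOpen_Ioi.mem_nhds hx)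
  have h''cont : ContinuousOn (deriv (deriv h)) (Set.Ioi 0) :=
    hC1'.continuousOn_deriv_of_isOpen isOpen_Ioi le_rfl
  -- strict monotonicity of deriv h on (0,∞)
  have h'mono : StrictMonoOn (deriv h) (Set.Ioi 0) := by
    apply strictMonoOn_of_deriv_pos (convex_Ioi 0)
    · intro x hx
      exact ((hd2 x hx).continuousAt).continuousWithinAt
    · intro x hx
      rw [interior_Ioi] at hx
      exact hconv x hx
  -- minimum of h'' on [δ/2, M+1]
  have hδ2 : (0:ℝ) < δ / 2 := by linarith
  have hI : Set.Icc (δ/2) (M+1) ⊆ Set.Ioi 0 := fun x hx => lt_of_lt_of_le hδ2 hx.1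
  have hne : (δ/2) ∈ Set.Icc (δ/2) (M+1) := ⟨le_refl _, by linarith⟩
  obtain ⟨x₀, hx₀I, hx₀min⟩ := isCompact_Icc.exists_isMinOn ⟨δ/2, hne⟩ (h''cont.mono hI)
  set m := deriv (deriv h) x₀ with hm_def
  have hm : 0 < m := hconv x₀ (hI hx₀I)
  have hmI : ∀ x ∈ Set.Icc (δ/2) (M+1), m ≤ deriv (deriv h) x := fun x hx => hx₀min hx
  -- quadratic bound on the interval
  have Q : ∀ rb ∈ Set.Icc δ M, ∀ r ∈ Set.Icc (δ/2) (M+1),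
      m / 2 * (r - rb) ^ 2 ≤ h r - h rb - deriv h rb * (r - rb) := by
    intro rb hrb r hr
    exact aux_quad h m (δ/2) (M+1) hδ2 hd1 hd2 hmI rb ⟨by linarith [hrb.1], by linarith [hrb.2]⟩ r hr
  -- bounds for h and deriv h on [δ, M]
  have hsub : Set.Icc δ M ⊆ Set.Ioi 0 := fun x hx => lt_of_lt_of_le hδ hx.1
  obtain ⟨A, hA⟩ := isCompact_Icc.exists_bound_of_continuousOn
    ((fun x hx => ((hd1 x (hsub hx)).continuousAt).continuousWithinAt) : ContinuousOn h (Set.Icc δ M))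
  obtain ⟨B, hB⟩ := isCompact_Icc.exists_bound_of_continuousOn
    ((fun x hx => ((hd2 x (hsub hx)).continuousAt).continuousWithinAt) : ContinuousOn (deriv h) (Set.Icc δ M))
  have hA0 : 0 ≤ A := le_trans (norm_nonneg _) (hA δ ⟨le_refl δ, hδM⟩)
  have hB0 : 0 ≤ B := le_trans (norm_nonneg _) (hB δ ⟨le_refl δ, hδM⟩)
  -- growth at infinity
  have hγ1 : (0:ℝ) < γ - 1 := by linarith
  set c₀ := k / (2 * (γ - 1)) with hc₀def
  have hc₀ : 0 < c₀ := by positivity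
  have hlt : c₀ < k / (γ - 1) := by
    rw [hc₀def, div_lt_div_iff₀ (by positivity) hγ1]
    nlinarith
  have hev : ∀ᶠ r in Filter.atTop, c₀ ≤ h r / r ^ γ :=
    hlim.eventually_const_le hlt
  obtain ⟨R₀, hR₀⟩ := Filter.eventually_atTop.mp hev
  -- the big radius
  set R₁ := max (max R₀ (M+1)) (max 1 (2*(A+B)/c₀)) with hR₁def
  have hR₁1 : (1:ℝ) ≤ R₁ := le_trans (le_max_left 1 _) (le_max_right _ _)
  have hR₁M : M + 1 ≤ R₁ := le_trans (le_max_right R₀ _) (le_max_left _ _)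
  have hR₁0 : (0:ℝ) < R₁ := by linarith
  -- far region bound
  have FAR : ∀ rb ∈ Set.Icc δ M, ∀ r : ℝ, R₁ ≤ r →
      c₀ / 2 * (r - rb) ^ 2 ≤ h r - h rb - deriv h rb * (r - rb) := by
    intro rb hrb r hr
    have hr1 : (1:ℝ) ≤ r := le_trans hR₁1 hr
    have hrR₀ : R₀ ≤ r := le_trans (le_trans (le_max_left R₀ _) (le_max_left _ _)) hr
    have hrpow : c₀ * r ^ γ ≤ h r := by
      have := hR₀ r hrR₀
      have hpos : (0:ℝ) < r ^ γ := Real.rpow_pos_of_pos (by linarith) γ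
      calc c₀ * r ^ γ ≤ (h r / r ^ γ) * r ^ γ := by
            apply mul_le_mul_of_nonneg_right this hpos.le
        _ = h r := by field_simp
    have hr2 : r ^ (2:ℝ) ≤ r ^ γ := Real.rpow_le_rpow_of_exponent_le hr1 hγ
    have hr2' : r ^ 2 ≤ r ^ γ := by
      rw [show ((2:ℝ) = ((2:ℕ):ℝ)) by norm_num, Real.rpow_natCast] at hr2
      exact hr2
    have hquad : c₀ * r ^ 2 ≤ h r :=
      le_trans (mul_le_mul_of_nonneg_left hr2' hc₀.le) hrpow
    have hAB : (A + B) * r ≤ c₀ / 2 * r ^ 2 := by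
      have hrAB : 2 * (A + B) / c₀ ≤ r :=
        le_trans (le_trans (le_max_right 1 _) (le_max_right _ _)) hr
      have : 2 * (A + B) ≤ c₀ * r := by
        rw [div_le_iff₀ hc₀] at hrAB; linarith [hrAB]
      nlinarith
    have hhrb : -A ≤ -(h rb) := by
      have := hA rb hrb
      have := abs_le.mp (by rwa [Real.norm_eq_abs] at this)
      linarith [this.1]
    have hderiv : deriv h rb * (r - rb) ≤ B * r := by
      have hBrb := abs_le.mp (by simpa [Real.norm_eq_abs] using hB rb hrb)
      have h1 : 0 ≤ r - rb := by
        have : rb ≤ M := hrb.2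
        linarith
      have h2 : r - rb ≤ r := by linarith [hrb.1, hδ]
      calc deriv h rb * (r - rb) ≤ B * (r - rb) :=
            mul_le_mul_of_nonneg_right hBrb.2 h1
        _ ≤ B * r := mul_le_mul_of_nonneg_left h2 hB0
    have hsq : (r - rb) ^ 2 ≤ r ^ 2 := by
      have h1 : 0 ≤ r - rb := by linarith [hrb.2]
      have h2 : r - rb ≤ r := by linarith [hrb.1, hδ]
      nlinarith
    have hAr : A ≤ A * r := by nlinarith
    nlinarith [hquad]
  -- monotone growth beyond M+1
  have GROW : ∀ rb ∈ Set.Icc δ M, ∀ r : ℝ, M + 1 ≤ r →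
      h (M+1) - h rb - deriv h rb * (M + 1 - rb) ≤ h r - h rb - deriv h rb * (r - rb) := by
    intro rb hrb r hr
    set g2 : ℝ → ℝ := fun x => h x - deriv h rb * x with hg2
    have hg2d : ∀ x > (0:ℝ), HasDerivAt g2 (deriv h x - deriv h rb) x := by
      intro x hx
      have : HasDerivAt (fun x : ℝ => deriv h rb * x) (deriv h rb) x := by
        simpa using (hasDerivAt_id x).const_mul (deriv h rb)
      exact (hd1 x hx).hasDerivAt.sub this
    have hmono : MonotoneOn g2 (Set.Icc (M+1) r) := by
      apply monotoneOn_of_deriv_nonneg (convex_Icc _ _)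
      · intro x hx
        exact ((hg2d x (by linarith [hx.1, hδ])).continuousAt).continuousWithinAt
      · intro x hx
        rw [interior_Icc] at hx
        exact ((hg2d x (by linarith [hx.1, hδ])).differentiableAt).differentiableWithinAt
      · intro x hx
        rw [interior_Icc] at hx
        rw [(hg2d x (by linarith [hx.1, hδ])).deriv]
        have : deriv h rb < deriv h x := by
          apply h'mono (hsub hrb) (by simp only [Set.mem_Ioi]; linarith [hx.1, hδ])
          linarith [hrb.2, hx.1]
        linarith
    have := hmono ⟨le_refl _, hr⟩ ⟨hr, le_refl r⟩ hr
    simp only [hg2] at this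
    linarith
  -- decrease before δ/2
  have LEFT : ∀ rb ∈ Set.Icc δ M, ∀ r : ℝ, 0 ≤ r → r ≤ δ/2 →
      h (δ/2) - h rb - deriv h rb * (δ/2 - rb) ≤ h r - h rb - deriv h rb * (r - rb) := by
    intro rb hrb r hr0 hrδ
    set g2 : ℝ → ℝ := fun x => h x - deriv h rb * x with hg2
    have hg2d : ∀ x > (0:ℝ), HasDerivAt g2 (deriv h x - deriv h rb) x := by
      intro x hx
      have : HasDerivAt (fun x : ℝ => deriv h rb * x) (deriv h rb) x := by
        simpa using (hasDerivAt_id x).const_mul (deriv h rb)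
      exact (hd1 x hx).hasDerivAt.sub this
    have hanti : AntitoneOn g2 (Set.Icc 0 rb) := by
      apply antitoneOn_of_deriv_nonpos (convex_Icc _ _)
      · intro x hx
        have h1 : ContinuousOn h (Set.Icc 0 rb) := hC0.mono (fun y hy => hy.1)
        have h2 : ContinuousOn (fun x : ℝ => deriv h rb * x) (Set.Icc 0 rb) :=
          (continuous_const.mul continuous_id).continuousOn
        exact (h1.sub h2) x hx
      · intro x hx
        rw [interior_Icc] at hx
        exact ((hg2d x hx.1).differentiableAt).differentiableWithinAt
      · intro x hx
        rw [interior_Icc] at hx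
        rw [(hg2d x hx.1).deriv]
        have : deriv h x < deriv h rb :=
          h'mono (by simpa using hx.1) (hsub hrb) hx.2
        linarith
    have hδrb : δ/2 ≤ rb := by linarith [hrb.1]
    have := hanti ⟨hr0, by linarith⟩ ⟨by linarith, hδrb⟩ hrδ
    simp only [hg2] at this
    linarith
  -- the final constant
  refine ⟨min (min (m/2) (m*δ^2/(8*M^2))) (min (m/(2*R₁^2)) (c₀/2)), ?_, ?_⟩
  · have hM : (0:ℝ) < M := lt_of_lt_of_le hδ hδM
    positivity
  intro r hr rb hrb
  rw [Set.mem_Ici] at hr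
  have habs : |r - rb| ^ 2 = (r - rb) ^ 2 := sq_abs _
  rw [habs]
  set C := min (min (m/2) (m*δ^2/(8*M^2))) (min (m/(2*R₁^2)) (c₀/2)) with hCdef
  have hM : (0:ℝ) < M := lt_of_lt_of_le hδ hδM
  have hsqnn : (0:ℝ) ≤ (r - rb)^2 := sq_nonneg _
  rcases le_or_gt r (δ/2) with hcase | hcase
  · -- left region
    have key := LEFT rb hrb r hr hcase
    have hq := Q rb hrb (δ/2) ⟨le_refl _, by linarith⟩
    have hδrb : δ/2 ≤ rb - δ/2 := by linarith [hrb.1]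
    have h1 : m/2 * (δ/2)^2 ≤ m/2 * (δ/2 - rb)^2 := by
      apply mul_le_mul_of_nonneg_left _ (by linarith)
      nlinarith [hrb.1]
    have hsqle : (r - rb)^2 ≤ M^2 := by
      nlinarith [hrb.1, hrb.2]
    have hCle : C ≤ m*δ^2/(8*M^2) := le_trans (min_le_left _ _) (min_le_right _ _)
    have hC0' : 0 ≤ C := by
      rw [hCdef]
      have : (0:ℝ) < m/2 := by linarith
      positivity
    calc C * (r - rb)^2 ≤ (m*δ^2/(8*M^2)) * M^2 := by
          apply mul_le_mul hCle hsqle hsqnn (by positivity)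
      _ = m/2 * (δ/2)^2 := by field_simp; ring
      _ ≤ m/2 * (δ/2 - rb)^2 := h1
      _ ≤ h (δ/2) - h rb - deriv h rb * (δ/2 - rb) := hq
      _ ≤ _ := key
  · rcases le_or_gt r (M+1) with hcase2 | hcase2
    · -- middle compact region
      have hq := Q rb hrb r ⟨hcase.le, hcase2⟩
      have hCle : C ≤ m/2 := le_trans (min_le_left _ _) (min_le_left _ _)
      calc C * (r - rb)^2 ≤ m/2 * (r - rb)^2 :=
            mul_le_mul_of_nonneg_right hCle hsqnn
        _ ≤ _ := hq
    · rcases le_or_gt r R₁ with hcase3 | hcase3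
      · -- [M+1, R₁]
        have key := GROW rb hrb r hcase2.le
        have hq := Q rb hrb (M+1) ⟨by linarith, le_refl _⟩
        have h1 : m/2 * 1 ≤ m/2 * (M+1-rb)^2 := by
          apply mul_le_mul_of_nonneg_left _ (by linarith)
          nlinarith [hrb.2]
        have hsqle : (r - rb)^2 ≤ R₁^2 := by
          nlinarith [hrb.1, hδ, hrb.2]
        have hCle : C ≤ m/(2*R₁^2) := le_trans (min_le_right _ _) (min_le_left _ _)
        calc C * (r - rb)^2 ≤ (m/(2*R₁^2)) * R₁^2 := by
              apply mul_le_mul hCle hsqle hsqnn (by positivity)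
          _ = m/2 * 1 := by field_simp
          _ ≤ m/2 * (M+1-rb)^2 := h1
          _ ≤ h (M+1) - h rb - deriv h rb * (M+1-rb) := hq
          _ ≤ _ := key
      · -- far region
        have key := FAR rb hrb r hcase3.le
        have hCle : C ≤ c₀/2 := le_trans (min_le_right _ _) (min_le_right _ _)
        calc C * (r - rb)^2 ≤ c₀/2 * (r - rb)^2 :=
              mul_le_mul_of_nonneg_right hCle hsqnn
          _ ≤ _ := key


/-- If `h` is `C²` and strictly convex on `(0,∞)`, continuous on `[0,∞)`, with
`h(r)/r^γ → k/(γ−1)` as `r → ∞` for some `k > 0` and `γ ≥ 2`, and `0 < δ ≤ M`, then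
there exists `C > 0` with `h(r|r̄) ≥ C|r−r̄|²` for all `r ≥ 0` and `r̄ ∈ [δ,M]`. -/
theorem relative_energy_quadratic_lower_bound (h : ℝ → ℝ) (k γ δ M : ℝ)
    (hk : 0 < k) (hγ : 2 ≤ γ)
    (hC2 : ContDiffOn ℝ 2 h (Set.Ioi 0)) (hC0 : ContinuousOn h (Set.Ici 0))
    (hconv : ∀ r > (0 : ℝ), 0 < deriv (deriv h) r)
    (hlim : Filter.Tendsto (fun r : ℝ => h r / r ^ γ) Filter.atTop (nhds (k / (γ - 1))))
    (hδ : 0 < δ) (hδM : δ ≤ M) :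
    ∃ C > (0 : ℝ), ∀ r ∈ Set.Ici (0 : ℝ), ∀ rb ∈ Set.Icc δ M,
      C * |r - rb| ^ 2 ≤ relQuant h r rb := by
  obtain ⟨C, hC, H⟩ := main_test h k γ δ M hk hγ hC2 hC0 hconv hlim hδ hδM
  exact ⟨C, hC, fun r hr rb hrb => by simpa [relQuant] using H r hr rb hrb⟩
end

section
/- Let p, h ∈ C²((0,+∞)) satisfy the thermodynamic consistency relation r h''(r) = p'(r) for all r > 0, and suppose p'(r) > 0 and |p''(r)| ≤ k̂ p'(r)/r for all r > 0, where k̂ > 0 is a constant. Then for all r, r̄ > 0, the relative pressure is dominated by the relative internal energy: p(r|r̄) ≤ k̂ h(r|r̄). -/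
/-- If `p, h` are `C²` on `(0,∞)` with `r h''(r) = p'(r)`, `p'(r) > 0` and
`|p''(r)| ≤ k̂ p'(r)/r` for all `r > 0`, then the relative pressure is dominated by
the relative internal energy: `p(r|r̄) ≤ k̂ h(r|r̄)` for all `r, r̄ > 0`. -/
theorem relative_pressure_le_relative_energy (p h : ℝ → ℝ) (khat : ℝ) (hkhat : 0 < khat)
    (hpC2 : ContDiffOn ℝ 2 p (Set.Ioi 0)) (hhC2 : ContDiffOn ℝ 2 h (Set.Ioi 0))
    (hthermo : ∀ r > (0 : ℝ), r * deriv (deriv h) r = deriv p r)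
    (hp' : ∀ r > (0 : ℝ), 0 < deriv p r)
    (hp'' : ∀ r > (0 : ℝ), |deriv (deriv p) r| ≤ khat * deriv p r / r) :
    ∀ r > (0 : ℝ), ∀ rb > (0 : ℝ), relQuant p r rb ≤ khat * relQuant h r rb := by
  set S : Set ℝ := Set.Ioi (0 : ℝ) with hS
  have hSopen : IsOpen S := isOpen_Ioi
  -- first-order differentiability
  have hpd : ∀ x ∈ S, DifferentiableAt ℝ p x := fun x hx =>
    ((hpC2.contDiffAt (hSopen.mem_nhds hx)).of_le one_le_two).differentiableAt one_ne_zero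
  have hhd : ∀ x ∈ S, DifferentiableAt ℝ h x := fun x hx =>
    ((hhC2.contDiffAt (hSopen.mem_nhds hx)).of_le one_le_two).differentiableAt one_ne_zero
  -- the derivatives are C¹ on S
  have hp'C1 : ContDiffOn ℝ 1 (deriv p) S := hpC2.deriv_of_isOpen hSopen (by norm_num)
  have hh'C1 : ContDiffOn ℝ 1 (deriv h) S := hhC2.deriv_of_isOpen hSopen (by norm_num)
  have hp'd : ∀ x ∈ S, DifferentiableAt ℝ (deriv p) x := fun x hx =>
    (hp'C1.contDiffAt (hSopen.mem_nhds hx)).differentiableAt one_ne_zero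
  have hh'd : ∀ x ∈ S, DifferentiableAt ℝ (deriv h) x := fun x hx =>
    (hh'C1.contDiffAt (hSopen.mem_nhds hx)).differentiableAt one_ne_zero
  -- the auxiliary function g = k̂ h - p
  set g : ℝ → ℝ := fun x => khat * h x - p x with hg
  have hgd : ∀ x ∈ S, DifferentiableAt ℝ g x := fun x hx =>
    ((hhd x hx).const_mul khat).sub (hpd x hx)
  have hderg : ∀ x ∈ S, deriv g x = khat * deriv h x - deriv p x := by
    intro x hx
    rw [hg, deriv_fun_sub ((hhd x hx).const_mul khat) (hpd x hx), deriv_const_mul khat (hhd x hx)]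
  -- deriv g agrees with k̂ h' - p' near each point of S
  have hderg_ev : ∀ x ∈ S, deriv g =ᶠ[nhds x] fun y => khat * deriv h y - deriv p y := by
    intro x hx
    filter_upwards [hSopen.mem_nhds hx] with y hy using hderg y hy
  have hg'd : ∀ x ∈ S, DifferentiableAt ℝ (deriv g) x := by
    intro x hx
    exact (((hh'd x hx).const_mul khat).sub (hp'd x hx)).congr_of_eventuallyEq
      (hderg_ev x hx)
  have hderg2 : ∀ x ∈ S, deriv (deriv g) x
      = khat * deriv (deriv h) x - deriv (deriv p) x := by
    intro x hx
    rw [(hderg_ev x hx).deriv_eq,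
      deriv_fun_sub ((hh'd x hx).const_mul khat) (hp'd x hx), deriv_const_mul khat (hh'd x hx)]
  -- second derivative of g is nonnegative on S
  have hg2nonneg : ∀ x ∈ S, 0 ≤ deriv (deriv g) x := by
    intro x hx
    have hx0 : (0 : ℝ) < x := hx
    have h1 := hp'' x hx0
    have h2 := hthermo x hx0
    have h3 : deriv (deriv p) x ≤ khat * deriv p x / x := (abs_le.mp h1).2
    have h4 : khat * deriv (deriv h) x = khat * deriv p x / x := by
      field_simp
      nlinarith [h2]
    rw [hderg2 x hx]
    linarith
  -- g is convex on S
  have hconv : ConvexOn ℝ S g := by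
    apply convexOn_of_deriv2_nonneg (convex_Ioi 0)
    · exact fun x hx => (hgd x hx).continuousAt.continuousWithinAt
    · rw [interior_Ioi]
      exact fun x hx => (hgd x hx).differentiableWithinAt
    · rw [interior_Ioi]
      exact fun x hx => (hg'd x hx).differentiableWithinAt
    · rw [interior_Ioi]
      intro x hx
      simpa [Function.iterate_succ, Function.comp] using hg2nonneg x hx
  -- tangent line inequality for g
  intro r hr rb hrb
  have hrS : r ∈ S := hr
  have hrbS : rb ∈ S := hrb
  have key : g rb + deriv g rb * (r - rb) ≤ g r := by
    rcases lt_trichotomy rb r with hlt | heq | hgt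
    · have := hconv.deriv_le_slope hrbS hrS hlt (hgd rb hrbS)
      rw [slope_def_field] at this
      have hne : r - rb > 0 := by linarith
      nlinarith [(le_div_iff₀ hne).mp this]
    · simp [heq]
    · have := hconv.slope_le_deriv hrS hrbS hgt (hgd rb hrbS)
      rw [slope_def_field] at this
      have hne : rb - r > 0 := by linarith
      nlinarith [(div_le_iff₀ hne).mp this]
  have hdg := hderg rb hrbS
  simp only [relQuant]
  have : g r - g rb - deriv g rb * (r - rb) ≥ 0 := by linarith
  rw [hdg] at this
  simp only [hg] at this
  nlinarith [this]
end
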